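/- Let P, Q be probability measures on ℝ^n with densities p, q, Q ≪ P, and E(x) = q(x)/p(x). For each time i = 1, ..., t, let (X_i, Y_i^{(0)}, Y_i^{(1)}, ..., Y_i^{(M)}) be generated independently across i as follows: X_i ~ W ∈ {P, Q}, Y_i^{(0)} | X_i ~ V^J(X_i, ·), and conditionally on Y_i^{(0)}, Y_i^{(1)}, ..., Y_i^{(M)} are i.i.d. from U^J(Y_i^{(0)}, ·). Define Û_i = (M+1)·T(X_i) / (T(X_i) + Σ_{m=1}^M T(Y_i^{(m)})) with T(x) = c·q(x)/p(x), c > 0, and Ê_t = Π_{i=1}^t Û_i. Suppose Δ^J(y') = ∫ (q(y)/p(y)) U^J(y', dy) satisfies 0 < Δ^J(y') < ∞ and is continuous in y'. Then for every fixed t, as M → ∞, Ê_t converges almost surely to (Π_{i=1}^t E(X_i)) / (Π_{i=1}^t Δ^J(Y_i^{(0)})). -/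

import Mathlib

open MeasureTheory ProbabilityTheory Filter Finset

open scoped Topology

lemma aux_slln {α : Type*} [MeasurableSpace α]
    (ν : Measure (ℕ → α)) [IsProbabilityMeasure ν]
    (η : Measure α) [IsProbabilityMeasure η]
    (f : α → ℝ) (hf : Measurable f) (hint : Integrable f η)
    (h1 : ∀ (m : ℕ) (r : ℚ), ν {ys | f (ys m) < r} = η {y | f y < r})
    (h2 : ∀ (a b : ℕ), a ≠ b → ∀ (ra rb : ℚ),
      ν ({ys | f (ys a) < ra} ∩ {ys | f (ys b) < rb})
        = η {y | f y < ra} * η {y | f y < rb}) :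
    ∀ᵐ ys ∂ν, Tendsto (fun M : ℕ => (∑ m ∈ Finset.range M, f (ys m)) / M)
      atTop (𝓝 (∫ y, f y ∂η)) := by
  set R : ℕ → (ℕ → α) → ℝ := fun m ys => f (ys m) with hR
  have hRm : ∀ m, Measurable (R m) := fun m => hf.comp (measurable_pi_apply m)
  -- laws of the R m
  have hlaw : ∀ m, ν.map (R m) = η.map f := by
    intro m
    have h1' : IsProbabilityMeasure (ν.map (R m)) := Measure.isProbabilityMeasure_map (hRm m).aemeasurable
    have h2' : IsProbabilityMeasure (η.map f) := Measure.isProbabilityMeasure_map hf.aemeasurable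
    refine ext_of_generate_finite _ ?_ Real.isPiSystem_Iio_rat ?_ ?_
    · borelize ℝ; exact Real.borel_eq_generateFrom_Iio_rat
    · intro s hs
      simp only [Set.mem_iUnion, Set.mem_singleton_iff] at hs
      obtain ⟨r, rfl⟩ := hs
      rw [Measure.map_apply (hRm m) measurableSet_Iio, Measure.map_apply hf measurableSet_Iio]
      exact h1 m r
    · rw [h1'.measure_univ, h2'.measure_univ]
  have hident : ∀ m, IdentDistrib (R m) (R 0) ν ν :=
    fun m => ⟨(hRm m).aemeasurable, (hRm 0).aemeasurable, by rw [hlaw m, hlaw 0]⟩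
  -- pairwise independence
  have hindep : Pairwise (Function.onFun (IndepFun · · ν) R) := by
    intro x y hxy
    rw [Function.onFun, IndepFun_iff_Indep]
    have hgen : ∀ z : ℕ, MeasurableSpace.comap (R z) (borel ℝ)
        = MeasurableSpace.generateFrom ((R z ⁻¹' ·) '' (⋃ r : ℚ, {Set.Iio (r : ℝ)})) := by
      intro z
      rw [Real.borel_eq_generateFrom_Iio_rat, MeasurableSpace.comap_generateFrom]
    have hb : Real.measurableSpace = borel ℝ := BorelSpace.measurable_eq
    rw [hb, hgen x, hgen y]
    refine IndepSets.indep' ?_ ?_ (Real.isPiSystem_Iio_rat.comap _) (Real.isPiSystem_Iio_rat.comap _) ?_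
    · rintro s ⟨u, hu, rfl⟩
      simp only [Set.mem_iUnion, Set.mem_singleton_iff] at hu
      obtain ⟨r, rfl⟩ := hu
      exact (hRm x) measurableSet_Iio
    · rintro s ⟨u, hu, rfl⟩
      simp only [Set.mem_iUnion, Set.mem_singleton_iff] at hu
      obtain ⟨r, rfl⟩ := hu
      exact (hRm y) measurableSet_Iio
    · rintro s t ⟨u, hu, rfl⟩ ⟨v, hv, rfl⟩
      simp only [Set.mem_iUnion, Set.mem_singleton_iff] at hu hv
      obtain ⟨ra, rfl⟩ := hu
      obtain ⟨rb, rfl⟩ := hv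
      refine Filter.Eventually.of_forall fun _ => ?_
      simp only [Kernel.const_apply]
      show ν ({ys | f (ys x) < (ra:ℝ)} ∩ {ys | f (ys y) < (rb:ℝ)})
        = ν {ys | f (ys x) < (ra:ℝ)} * ν {ys | f (ys y) < (rb:ℝ)}
      rw [h2 x y hxy ra rb, h1 x ra, h1 y rb]
  -- integrability and mean
  have hmapint : Integrable (R 0) ν := by
    have : Integrable id (η.map f) := (integrable_map_measure aestronglyMeasurable_id
      hf.aemeasurable).mpr hint
    rw [← hlaw 0] at this
    exact (integrable_map_measure aestronglyMeasurable_id (hRm 0).aemeasurable).mp this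
  have hmean : (∫ ys, R 0 ys ∂ν) = ∫ y, f y ∂η := by
    have e1 : (∫ ys, R 0 ys ∂ν) = ∫ x, id x ∂(ν.map (R 0)) := by
      rw [integral_map (hRm 0).aemeasurable aestronglyMeasurable_id]; rfl
    have e2 : (∫ y, f y ∂η) = ∫ x, id x ∂(η.map f) := by
      rw [integral_map hf.aemeasurable aestronglyMeasurable_id]; rfl
    rw [e1, e2, hlaw 0]
  have := strong_law_ae_real R hmapint hindep hident
  rw [hmean] at this
  exact this


lemma aux_key {n : ℕ} {Ω : Type*} [MeasurableSpace Ω]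
    (μ : Measure Ω) [IsProbabilityMeasure μ]
    (UJ : Kernel (Fin n → ℝ) (Fin n → ℝ)) [IsMarkovKernel UJ]
    (f : (Fin n → ℝ) → ℝ) (hf : Measurable f)
    (g : (Fin n → ℝ) → ℝ) (hg : Measurable g)
    (hgdef : ∀ y', g y' = ∫ y, f y ∂(UJ y'))
    (hfint : ∀ y', Integrable f (UJ y'))
    (Y0 : Ω → (Fin n → ℝ)) (hY0 : Measurable Y0)
    (Y : ℕ → Ω → (Fin n → ℝ)) (hY : ∀ m, Measurable (Y m))
    (hcyl : ∀ (M : ℕ) (B : Fin M → Set (Fin n → ℝ)), (∀ m, MeasurableSet (B m)) →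
      ∀ (B0 : Set (Fin n → ℝ)), MeasurableSet B0 →
      μ (Y0 ⁻¹' B0 ∩ ⋂ m : Fin M, (Y m.1) ⁻¹' (B m))
        = ∫⁻ ω in Y0 ⁻¹' B0, ∏ m : Fin M, UJ (Y0 ω) (B m) ∂μ) :
    ∀ᵐ ω ∂μ, Tendsto (fun M : ℕ => (∑ m ∈ Finset.range M, f (Y m ω)) / M)
      atTop (𝓝 (g (Y0 ω))) := by
  classical
  set Z : Ω → (ℕ → Fin n → ℝ) := fun ω m => Y m ω with hZdef
  have hZ : Measurable Z := measurable_pi_lambda _ hY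
  have hPair : Measurable (fun ω => (Y0 ω, Z ω)) := hY0.prodMk hZ
  set ρ := μ.map Y0 with hρ
  haveI : IsProbabilityMeasure ρ := Measure.isProbabilityMeasure_map hY0.aemeasurable
  set κ := condDistrib Z Y0 μ with hκ
  haveI : IsProbabilityMeasure (μ.map (fun ω => (Y0 ω, Z ω))) :=
    Measure.isProbabilityMeasure_map hPair.aemeasurable
  have hmapPair : μ.map (fun ω => (Y0 ω, Z ω)) = ρ ⊗ₘ κ := by
    rw [hκ, condDistrib, hρ, ← Measure.fst_map_prodMk hZ (X := Y0)]
    exact (Measure.disintegrate _ _).symm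
  -- cylinder identity for κ
  have hcylκ : ∀ (M : ℕ) (B : Fin M → Set (Fin n → ℝ)), (∀ m, MeasurableSet (B m)) →
      ∀ᵐ y0 ∂ρ, κ y0 {ys | ∀ m : Fin M, ys m.1 ∈ B m} = ∏ m : Fin M, UJ y0 (B m) := by
    intro M B hB
    have hCylEq : {ys : ℕ → Fin n → ℝ | ∀ m : Fin M, ys m.1 ∈ B m}
        = ⋂ m : Fin M, (fun ys : ℕ → Fin n → ℝ => ys m.1) ⁻¹' B m := by
      ext ys; simp
    have hCyl : MeasurableSet {ys : ℕ → Fin n → ℝ | ∀ m : Fin M, ys m.1 ∈ B m} := by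
      rw [hCylEq]
      exact MeasurableSet.iInter fun m => (measurable_pi_apply _) (hB m)
    refine ae_eq_of_forall_setLIntegral_eq_of_sigmaFinite (Kernel.measurable_coe κ hCyl)
      (Finset.measurable_prod _ fun m _ => Kernel.measurable_coe UJ (hB m)) ?_
    intro B0 hB0 _
    have e1 : ∫⁻ y0 in B0, κ y0 {ys | ∀ m : Fin M, ys m.1 ∈ B m} ∂ρ
        = (ρ ⊗ₘ κ) (B0 ×ˢ {ys | ∀ m : Fin M, ys m.1 ∈ B m}) :=
      (Measure.compProd_apply_prod hB0 hCyl).symm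
    have e2 : (fun ω => (Y0 ω, Z ω)) ⁻¹' (B0 ×ˢ {ys | ∀ m : Fin M, ys m.1 ∈ B m})
        = Y0 ⁻¹' B0 ∩ ⋂ m : Fin M, (Y m.1) ⁻¹' (B m) := by
      ext ω; simp [Set.mem_prod, hZdef]
    rw [e1, ← hmapPair, Measure.map_apply hPair (hB0.prod hCyl), e2,
      hcyl M B hB B0 hB0, hρ, setLIntegral_map hB0
        (Finset.measurable_prod _ fun m _ => Kernel.measurable_coe UJ (hB m)) hY0]
  -- single-coordinate marginals
  have hsingle : ∀ᵐ y0 ∂ρ, ∀ (m : ℕ) (r : ℚ),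
      κ y0 {ys | f (ys m) < r} = UJ y0 {y | f y < r} := by
    rw [ae_all_iff]; intro m; rw [ae_all_iff]; intro r
    have hB : ∀ j : Fin (m + 1),
        MeasurableSet (if j.1 = m then f ⁻¹' Set.Iio (r : ℝ) else Set.univ) := by
      intro j; split
      · exact hf measurableSet_Iio
      · exact MeasurableSet.univ
    filter_upwards [hcylκ (m + 1) _ hB] with y0 hy0
    have eset : {ys : ℕ → Fin n → ℝ |
        ∀ j : Fin (m + 1), ys j.1 ∈ (if j.1 = m then f ⁻¹' Set.Iio (r : ℝ) else Set.univ)}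
        = {ys | f (ys m) < r} := by
      ext ys
      constructor
      · intro h
        have := h ⟨m, m.lt_succ_self⟩
        simpa using this
      · intro h j
        by_cases hj : j.1 = m
        · simpa [hj] using h
        · simp [hj]
    have eprod : (∏ j : Fin (m + 1),
        UJ y0 (if j.1 = m then f ⁻¹' Set.Iio (r : ℝ) else Set.univ)) = UJ y0 {y | f y < r} := by
      rw [Finset.prod_eq_single (⟨m, m.lt_succ_self⟩ : Fin (m + 1))]
      · rw [if_pos rfl]; rfl
      · intro j _ hj
        have hj' : j.1 ≠ m := fun h => hj (Fin.ext h)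
        simp [hj']
      · simp
    rw [eset, eprod] at hy0
    exact hy0
  -- pairwise products
  have hpairs : ∀ᵐ y0 ∂ρ, ∀ (a b : ℕ), a ≠ b → ∀ (ra rb : ℚ),
      κ y0 ({ys | f (ys a) < ra} ∩ {ys | f (ys b) < rb})
        = UJ y0 {y | f y < ra} * UJ y0 {y | f y < rb} := by
    rw [ae_all_iff]; intro a; rw [ae_all_iff]; intro b
    by_cases hab : a = b
    · exact Filter.Eventually.of_forall fun y0 h => absurd hab h
    suffices hmain : ∀ᵐ y0 ∂ρ, ∀ (ra rb : ℚ),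
        κ y0 ({ys | f (ys a) < ra} ∩ {ys | f (ys b) < rb})
          = UJ y0 {y | f y < ra} * UJ y0 {y | f y < rb} by
      exact hmain.mono fun y0 h _ => h
    rw [ae_all_iff]; intro ra; rw [ae_all_iff]; intro rb
    set M := max a b + 1 with hM
    have ha : a < M := Nat.lt_succ_of_le (le_max_left a b)
    have hb : b < M := Nat.lt_succ_of_le (le_max_right a b)
    set B : Fin M → Set (Fin n → ℝ) := fun j =>
      if j.1 = a then f ⁻¹' Set.Iio (ra : ℝ)
      else if j.1 = b then f ⁻¹' Set.Iio (rb : ℝ) else Set.univ with hBdef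
    have hBm : ∀ j, MeasurableSet (B j) := by
      intro j; rw [hBdef]; dsimp only; split
      · exact hf measurableSet_Iio
      · split
        · exact hf measurableSet_Iio
        · exact MeasurableSet.univ
    filter_upwards [hcylκ M B hBm] with y0 hy0
    have eset : {ys : ℕ → Fin n → ℝ | ∀ j : Fin M, ys j.1 ∈ B j}
        = {ys | f (ys a) < ra} ∩ {ys | f (ys b) < rb} := by
      ext ys
      constructor
      · intro h
        have hne : b ≠ a := fun hh => hab hh.symm
        constructor
        · have := h ⟨a, ha⟩; simpa [hBdef] using this
        · have := h ⟨b, hb⟩; simpa [hBdef, hne] using this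
      · rintro ⟨h1, h2⟩ j
        simp only [hBdef]
        split
        · next hj => rw [hj]; exact h1
        · split
          · next hj => rw [hj]; exact h2
          · trivial
    have eprod : (∏ j : Fin M, UJ y0 (B j))
        = UJ y0 {y | f y < ra} * UJ y0 {y | f y < rb} := by
      have hne : (⟨a, ha⟩ : Fin M) ≠ ⟨b, hb⟩ := by
        intro h; exact hab (by simpa using congrArg Fin.val h)
      rw [← Finset.prod_subset (Finset.subset_univ ({⟨a, ha⟩, ⟨b, hb⟩} : Finset (Fin M)))
        (by
          intro j _ hj
          simp only [Finset.mem_insert, Finset.mem_singleton] at hj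
          push_neg at hj
          have hja : j.1 ≠ a := fun h => hj.1 (Fin.ext h)
          have hjb : j.1 ≠ b := fun h => hj.2 (Fin.ext h)
          simp [hBdef, hja, hjb]),
        Finset.prod_pair hne]
      have hne : b ≠ a := fun hh => hab hh.symm
      have e1 : B ⟨a, ha⟩ = f ⁻¹' Set.Iio (ra : ℝ) := by simp [hBdef]
      have e2 : B ⟨b, hb⟩ = f ⁻¹' Set.Iio (rb : ℝ) := by simp [hBdef, hne]
      rw [e1, e2]
      rfl
    rw [eset, eprod] at hy0
    exact hy0
  -- apply the SLLN fiberwise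
  have hae : ∀ᵐ y0 ∂ρ, ∀ᵐ ys ∂κ y0,
      Tendsto (fun M : ℕ => (∑ m ∈ Finset.range M, f (ys m)) / M) atTop (𝓝 (g y0)) := by
    filter_upwards [hsingle, hpairs] with y0 h1 h2
    have := aux_slln (κ y0) (UJ y0) f hf (hfint y0) h1 h2
    rw [← hgdef y0] at this
    exact this
  -- transfer back
  have hD : MeasurableSet {z : (Fin n → ℝ) × (ℕ → Fin n → ℝ) |
      Tendsto (fun M : ℕ => (∑ m ∈ Finset.range M, f (z.2 m)) / M) atTop (𝓝 (g z.1))} := by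
    refine measurableSet_tendsto_fun (fun M => ?_) (hg.comp measurable_fst)
    exact (Finset.measurable_sum _ fun m _ =>
      hf.comp ((measurable_pi_apply m).comp measurable_snd)).div_const _
  have := (Measure.ae_compProd_iff hD).mpr hae
  rw [← hmapPair] at this
  exact (ae_map_iff hPair.aemeasurable hD).mp this


/-- **Proposition 8, ULR process limit.**
Let `P, Q` have Lebesgue densities `p, q`, `Q ≪ P`, `E(x) = q(x)/p(x)`. For each
`i = 1, …, t`, independently across `i`: `X_i ~ W ∈ {P, Q}`,
`Y_i⁽⁰⁾ | X_i ~ V^J(X_i, ·)`, and conditionally on `Y_i⁽⁰⁾` the samples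
`Y_i⁽¹⁾, Y_i⁽²⁾, …` are i.i.d. from `U^J(Y_i⁽⁰⁾, ·)`, independent of `X_i`. Let
`Û_i = (M+1)·T(X_i)/(T(X_i) + Σ_{m=1}^M T(Y_i⁽ᵐ⁾))` with `T = c·q/p`, `c > 0`, and
`Ê_t = Π_{i=1}^t Û_i`. If `Δ^J(y') = ∫ (q/p) dU^J(y',·)` lies in `(0, ∞)` and is
continuous in `y'`, then for fixed `t`, as `M → ∞`, `Ê_t` converges almost surely
to `(Π_i E(X_i)) / (Π_i Δ^J(Y_i⁽⁰⁾))`. -/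
theorem besag_clifford_ulr_process_limit
    {n : ℕ} (t : ℕ) {Ω : Type*} [MeasurableSpace Ω]
    (μ : Measure Ω) [IsProbabilityMeasure μ]
    (P Q W : Measure (Fin n → ℝ))
    [IsProbabilityMeasure P] [IsProbabilityMeasure Q]
    (p q : (Fin n → ℝ) → ℝ) (hp : Measurable p) (hq : Measurable q)
    (hp0 : ∀ x, 0 ≤ p x) (hq0 : ∀ x, 0 ≤ q x)
    (hP : P = volume.withDensity (fun x => ENNReal.ofReal (p x)))
    (hQ : Q = volume.withDensity (fun x => ENNReal.ofReal (q x)))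
    (hQP : Q ≪ P)
    (UJ VJ : Kernel (Fin n → ℝ) (Fin n → ℝ))
    [IsMarkovKernel UJ] [IsMarkovKernel VJ]
    (T : (Fin n → ℝ) → ℝ) (c : ℝ) (hc : 0 < c)
    (hTdef : ∀ x, T x = c * (q x / p x))
    (X : Fin t → Ω → (Fin n → ℝ)) (Y0 : Fin t → Ω → (Fin n → ℝ))
    (Y : Fin t → ℕ → Ω → (Fin n → ℝ))
    (hX : ∀ i, Measurable (X i)) (hY0 : ∀ i, Measurable (Y0 i))
    (hY : ∀ i m, Measurable (Y i m))
    (hW : W = P ∨ W = Q)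
    -- the tuples `(X_i, Y_i⁽⁰⁾, (Y_i⁽ᵐ⁾)_m)` are independent across `i`
    (hindep : iIndepFun
      (fun (i : Fin t) (ω : Ω) => (X i ω, Y0 i ω, fun m : ℕ => Y i m ω)) μ)
    -- for each `i`: `X_i ~ W` and `Y_i⁽⁰⁾ | X_i ~ V^J(X_i, ·)`
    (hXlaw : ∀ i, Measure.map (X i) μ = W)
    (hXY0law : ∀ i, Measure.map (fun ω => (X i ω, Y0 i ω)) μ = W ⊗ₘ VJ)
    -- conditionally on `Y_i⁽⁰⁾`, `Y_i⁽¹⁾, Y_i⁽²⁾, …` are i.i.d. from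
    -- `U^J(Y_i⁽⁰⁾, ·)`, independent of `X_i`
    (hcond : ∀ (i : Fin t) (M : ℕ) (A : Set ((Fin n → ℝ) × (Fin n → ℝ)))
        (B : Fin M → Set (Fin n → ℝ)), MeasurableSet A → (∀ m, MeasurableSet (B m)) →
      μ ({ω | (X i ω, Y0 i ω) ∈ A} ∩ ⋂ m : Fin M, (Y i m.1) ⁻¹' (B m))
        = ∫⁻ ω in {ω | (X i ω, Y0 i ω) ∈ A}, ∏ m : Fin M, UJ (Y0 i ω) (B m) ∂μ)
    -- `0 < Δ^J(y') < ∞` for every `y'`, and `Δ^J` is continuous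
    (hΔpos : ∀ y', 0 < ∫ y, q y / p y ∂(UJ y'))
    (hΔfin : ∀ y', Integrable (fun y => q y / p y) (UJ y'))
    (hΔcont : Continuous (fun y' => ∫ y, q y / p y ∂(UJ y'))) :
    ∀ᵐ ω ∂μ, Tendsto
      (fun M : ℕ => ∏ i : Fin t,
        ((M : ℝ) + 1) * T (X i ω) / (T (X i ω) + ∑ m ∈ Finset.range M, T (Y i m ω)))
      atTop
      (nhds ((∏ i : Fin t, q (X i ω) / p (X i ω)) /
        ∏ i : Fin t, ∫ y, q y / p y ∂(UJ (Y0 i ω)))) := by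
  classical
  set f : (Fin n → ℝ) → ℝ := fun x => q x / p x with hfdef
  have hf : Measurable f := hq.div hp
  set g : (Fin n → ℝ) → ℝ := fun y' => ∫ y, q y / p y ∂(UJ y') with hgdef
  have hg : Measurable g := hΔcont.measurable
  have key : ∀ i : Fin t, ∀ᵐ ω ∂μ, Tendsto
      (fun M : ℕ => (∑ m ∈ Finset.range M, f (Y i m ω)) / M) atTop (𝓝 (g (Y0 i ω))) := by
    intro i
    refine aux_key μ UJ f hf g hg (fun y' => rfl) hΔfin (Y0 i) (hY0 i) (fun m => Y i m)
      (fun m => hY i m) ?_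
    intro M B hB B0 hB0
    have hA : MeasurableSet ((Set.univ : Set (Fin n → ℝ)) ×ˢ B0) := MeasurableSet.univ.prod hB0
    have h := hcond i M ((Set.univ : Set (Fin n → ℝ)) ×ˢ B0) B hA hB
    have hset : {ω | (X i ω, Y0 i ω) ∈ (Set.univ : Set (Fin n → ℝ)) ×ˢ B0} = Y0 i ⁻¹' B0 := by
      ext ω; simp [Set.mem_prod]
    rw [hset] at h
    exact h
  have keyall : ∀ᵐ ω ∂μ, ∀ i : Fin t, Tendsto
      (fun M : ℕ => (∑ m ∈ Finset.range M, f (Y i m ω)) / M) atTop (𝓝 (g (Y0 i ω))) :=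
    ae_all_iff.2 key
  filter_upwards [keyall] with ω hω
  have hlim : ∀ i : Fin t, Tendsto (fun M : ℕ =>
      ((M : ℝ) + 1) * T (X i ω) / (T (X i ω) + ∑ m ∈ Finset.range M, T (Y i m ω)))
      atTop (𝓝 (f (X i ω) / g (Y0 i ω))) := by
    intro i
    have hL : 0 < g (Y0 i ω) := hΔpos (Y0 i ω)
    have hcL : (0:ℝ) < c * g (Y0 i ω) := mul_pos hc hL
    have hTsum : ∀ M : ℕ, (∑ m ∈ Finset.range M, T (Y i m ω))
        = c * ∑ m ∈ Finset.range M, f (Y i m ω) := by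
      intro M; rw [Finset.mul_sum]; exact Finset.sum_congr rfl fun m _ => hTdef _
    have hden : Tendsto (fun M : ℕ =>
        (T (X i ω) + ∑ m ∈ Finset.range M, T (Y i m ω)) / ((M:ℝ) + 1)) atTop
        (𝓝 (c * g (Y0 i ω))) := by
      have h1 : Tendsto (fun M : ℕ => T (X i ω) / ((M:ℝ) + 1)) atTop (𝓝 0) :=
        Tendsto.div_atTop tendsto_const_nhds
          (tendsto_atTop_add_const_right _ 1 tendsto_natCast_atTop_atTop)
      have h2 : Tendsto (fun M : ℕ =>
          c * (((∑ m ∈ Finset.range M, f (Y i m ω)) / M) * ((M:ℝ) / ((M:ℝ) + 1)))) atTop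
          (𝓝 (c * (g (Y0 i ω) * 1))) :=
        ((hω i).mul (tendsto_natCast_div_add_atTop (1:ℝ))).const_mul c
      have h3 := h1.add h2
      rw [show (0:ℝ) + c * (g (Y0 i ω) * 1) = c * g (Y0 i ω) by ring] at h3
      have heq : ∀ᶠ M : ℕ in atTop,
          (fun M : ℕ => T (X i ω) / ((M:ℝ) + 1)
            + c * (((∑ m ∈ Finset.range M, f (Y i m ω)) / M) * ((M:ℝ) / ((M:ℝ) + 1)))) M
          = (T (X i ω) + ∑ m ∈ Finset.range M, T (Y i m ω)) / ((M:ℝ) + 1) := by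
        filter_upwards [eventually_ge_atTop 1] with M hM
        have hM0 : (M:ℝ) ≠ 0 := Nat.cast_ne_zero.2 (by omega)
        have hM1 : (M:ℝ) + 1 ≠ 0 := by positivity
        rw [hTsum]
        field_simp
        try ring
      exact Filter.Tendsto.congr' heq h3
    have hfinal : Tendsto (fun M : ℕ => T (X i ω) /
        ((T (X i ω) + ∑ m ∈ Finset.range M, T (Y i m ω)) / ((M:ℝ) + 1))) atTop
        (𝓝 (T (X i ω) / (c * g (Y0 i ω)))) :=
      tendsto_const_nhds.div hden (ne_of_gt hcL)
    have heq3 : T (X i ω) / (c * g (Y0 i ω)) = f (X i ω) / g (Y0 i ω) := by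
      rw [hTdef, mul_div_mul_left _ _ (ne_of_gt hc)]
    rw [heq3] at hfinal
    refine hfinal.congr fun M => ?_
    rw [div_div_eq_mul_div, mul_comm]
  have hall := tendsto_finset_prod (Finset.univ : Finset (Fin t)) (fun i _ => hlim i)
  have hprodeq : (∏ i : Fin t, (f (X i ω) / g (Y0 i ω)))
      = (∏ i : Fin t, q (X i ω) / p (X i ω)) /
        ∏ i : Fin t, ∫ y, q y / p y ∂(UJ (Y0 i ω)) := by
    rw [Finset.prod_div_distrib]
  rw [← hprodeq]
  exact hall
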